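/- Let D_∞ = ⟨r, t | r² = t² = e⟩ be the infinite dihedral group and x, y, x', y' ∈ ℂ×. Define ϱ_{x,y} on ℂβ_r ⊕ ℂβ_t by r·β_r = -β_r, r·β_t = β_t + xβ_r, t·β_t = -β_t, t·β_r = β_r + yβ_t. Then ϱ_{x,y} ≅ ϱ_{x',y'} as representations of D_∞ if and only if xy = x'y'. -/

import Mathlib

open DihedralGroup

/-- For `x, y, x', y' ∈ ℂ×`, the representations `ϱ_{x,y}` and `ϱ_{x',y'}` of the
infinite dihedral group `D_∞ = DihedralGroup 0` are isomorphic iff `xy = x'y'`. -/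
theorem varrho_iso_iff (x y x' y' : ℂ) (hx : x ≠ 0) (hy : y ≠ 0) (hx' : x' ≠ 0) (hy' : y' ≠ 0)
    (βr βt : Fin 2 → ℂ) (hβr : βr = Pi.single 0 1) (hβt : βt = Pi.single 1 1)
    (ρ ρ' : Representation ℂ (DihedralGroup 0) (Fin 2 → ℂ))
    (hrr : ρ (sr 0) βr = -βr) (hrt : ρ (sr 0) βt = βt + x • βr)
    (htt : ρ (sr 1) βt = -βt) (htr : ρ (sr 1) βr = βr + y • βt)
    (hrr' : ρ' (sr 0) βr = -βr) (hrt' : ρ' (sr 0) βt = βt + x' • βr)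
    (htt' : ρ' (sr 1) βt = -βt) (htr' : ρ' (sr 1) βr = βr + y' • βt) :
    (∃ e : (Fin 2 → ℂ) ≃ₗ[ℂ] (Fin 2 → ℂ), ∀ (g : DihedralGroup 0) (v : Fin 2 → ℂ),
      e (ρ g v) = ρ' g (e v)) ↔ x * y = x' * y' := by
  have hr0 : βr 0 = 1 := by rw [hβr]; simp
  have hr1 : βr 1 = 0 := by rw [hβr]; simp
  have ht0 : βt 0 = 0 := by rw [hβt]; simp
  have ht1 : βt 1 = 1 := by rw [hβt]; simp
  have hdec : ∀ v : Fin 2 → ℂ, v = v 0 • βr + v 1 • βt := by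
    intro v; funext i; fin_cases i <;>
      simp [hr0, hr1, ht0, ht1]
  -- general formulas for the action of `sr 0` and `sr 1` on any vector
  have hρ0 : ∀ w : Fin 2 → ℂ, ρ (sr 0) w = (-w 0 + w 1 * x) • βr + w 1 • βt := by
    intro w
    conv_lhs => rw [hdec w]
    rw [map_add, map_smul, map_smul, hrr, hrt]
    module
  have hρ1 : ∀ w : Fin 2 → ℂ, ρ (sr 1) w = w 0 • βr + (w 0 * y - w 1) • βt := by
    intro w
    conv_lhs => rw [hdec w]
    rw [map_add, map_smul, map_smul, htr, htt]
    module
  have hρ0' : ∀ w : Fin 2 → ℂ, ρ' (sr 0) w = (-w 0 + w 1 * x') • βr + w 1 • βt := by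
    intro w
    conv_lhs => rw [hdec w]
    rw [map_add, map_smul, map_smul, hrr', hrt']
    module
  have hρ1' : ∀ w : Fin 2 → ℂ, ρ' (sr 1) w = w 0 • βr + (w 0 * y' - w 1) • βt := by
    intro w
    conv_lhs => rw [hdec w]
    rw [map_add, map_smul, map_smul, htr', htt']
    module
  have comp0 : ∀ α β : ℂ, (α • βr + β • βt) 0 = α := by
    intro α β; simp [hr0, ht0]
  have comp1 : ∀ α β : ℂ, (α • βr + β • βt) 1 = β := by
    intro α β; simp [hr1, ht1]
  constructor
  · rintro ⟨e, he⟩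
    set a := e βr 0 with ha
    set c := e βr 1 with hc
    set b := e βt 0 with hb
    set d := e βt 1 with hd
    -- c = 0
    have hc0 : c = 0 := by
      have h := congrFun (he (sr 0) βr) 1
      rw [hrr, map_neg, hρ0' (e βr)] at h
      simp only [Pi.neg_apply, comp1] at h
      linear_combination (-1/2 : ℂ) * h
    -- b = 0
    have hb0 : b = 0 := by
      have h := congrFun (he (sr 1) βt) 0
      rw [htt, map_neg, hρ1' (e βt)] at h
      simp only [Pi.neg_apply, comp0] at h
      linear_combination (-1/2 : ℂ) * h
    -- x * a = d * x'
    have h3 : x * a = d * x' := by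
      have h := congrFun (he (sr 0) βt) 0
      rw [hrt, map_add, map_smul, hρ0' (e βt)] at h
      simp only [Pi.add_apply, Pi.smul_apply, smul_eq_mul, comp0, ← ha, ← hb, ← hd] at h
      rw [hb0] at h
      linear_combination h
    -- y * d = a * y'
    have h4 : y * d = a * y' := by
      have h := congrFun (he (sr 1) βr) 1
      rw [htr, map_add, map_smul, hρ1' (e βr)] at h
      simp only [Pi.add_apply, Pi.smul_apply, smul_eq_mul, comp1, ← ha, ← hc, ← hd] at h
      rw [hc0] at h
      linear_combination h
    have ha0 : a ≠ 0 := by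
      intro h0
      have hz : e βr = 0 := by
        funext i; fin_cases i
        · simpa [h0] using ha.symm
        · simpa [hc0] using hc.symm
      have : βr = 0 := by
        apply e.injective
        rw [hz, map_zero]
      rw [this] at hr0
      simp at hr0
    have hd0 : d ≠ 0 := by
      intro h0
      rw [h0, zero_mul] at h3
      exact ha0 ((mul_eq_zero.mp h3).resolve_left hx)
    have had : a * d ≠ 0 := mul_ne_zero ha0 hd0
    apply mul_right_cancel₀ had
    linear_combination (y * d) * h3 + (x' * d) * h4
  · intro hxy
    -- the intertwiner: diagonal map with entries x', x
    set E : (Fin 2 → ℂ) ≃ₗ[ℂ] (Fin 2 → ℂ) :=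
      LinearEquiv.piCongrRight (fun i =>
        LinearEquiv.smulOfNeZero ℂ ℂ (if i = 0 then x' else x)
          (by split <;> assumption)) with hE
    have hE0 : ∀ v : Fin 2 → ℂ, E v 0 = x' * v 0 := by
      intro v; simp [hE, LinearEquiv.smulOfNeZero, LinearEquiv.smulOfUnit,
        DistribMulAction.toLinearEquiv, Units.smul_def]
    have hE1 : ∀ v : Fin 2 → ℂ, E v 1 = x * v 1 := by
      intro v; simp [hE, LinearEquiv.smulOfNeZero, LinearEquiv.smulOfUnit,
        DistribMulAction.toLinearEquiv, Units.smul_def]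
    refine ⟨E, ?_⟩
    set P : DihedralGroup 0 → Prop :=
      fun g => ∀ v : Fin 2 → ℂ, E (ρ g v) = ρ' g (E v) with hP
    suffices hPall : ∀ g, P g by exact hPall
    have hE' : ∀ v : Fin 2 → ℂ, E v = (x' * v 0) • βr + (x * v 1) • βt := by
      intro v
      conv_lhs => rw [hdec (E v)]
      rw [hE0, hE1]
    have hP0 : P (sr 0) := by
      intro v
      rw [hρ0 v, hρ0' (E v), hE', comp0, comp1, hE0, hE1]
      congr 1 <;> congr 1 <;> ring
    have hP1 : P (sr 1) := by
      intro v
      rw [hρ1 v, hρ1' (E v), hE', comp0, comp1, hE0, hE1]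
      congr 1 <;> congr 1 <;> first | ring1 | linear_combination v 0 * hxy
    have hPone : P 1 := by intro v; simp
    have hPmul : ∀ g h, P g → P h → P (g * h) := by
      intro g h pg ph v
      rw [map_mul, map_mul, Module.End.mul_apply, Module.End.mul_apply, ← ph v]
      exact pg _
    have hPinv : ∀ g, P g → P g⁻¹ := by
      intro g pg v
      have h1 := pg (ρ g⁻¹ v)
      have h2 : ρ g (ρ g⁻¹ v) = v := by
        rw [← Module.End.mul_apply, ← map_mul, mul_inv_cancel, map_one, Module.End.one_apply]
      rw [h2] at h1
      have h3 : ∀ w, ρ' g⁻¹ (ρ' g w) = w := by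
        intro w
        rw [← Module.End.mul_apply, ← map_mul, inv_mul_cancel, map_one, Module.End.one_apply]
      calc E (ρ g⁻¹ v) = ρ' g⁻¹ (ρ' g (E (ρ g⁻¹ v))) := (h3 _).symm
        _ = ρ' g⁻¹ (E v) := by rw [← h1]
    have hPr1 : P (r 1) := by
      have h := hPmul _ _ hP0 hP1
      rw [show (sr 0 : DihedralGroup 0) * sr 1 = r 1 by rw [sr_mul_sr, sub_zero]] at h
      exact h
    have hPrm1 : P (r (-1)) := by
      have h := hPmul _ _ hP1 hP0
      rw [show (sr 1 : DihedralGroup 0) * sr 0 = r (-1) by rw [sr_mul_sr, zero_sub]] at h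
      exact h
    have hPr : ∀ m : ZMod 0, P (r m) := by
      intro m
      induction m using Int.induction_on with
      | zero => exact hPone
      | succ k ih =>
        rw [show (r ((k + 1 : ℤ)) : DihedralGroup 0) = r ((k : ℤ)) * r 1 from
          (r_mul_r _ _).symm]
        exact hPmul _ _ ih hPr1
      | pred k ih =>
        rw [show (r ((-k - 1 : ℤ)) : DihedralGroup 0) = r ((-k : ℤ)) * r (-1) from
          (r_mul_r _ _).symm]
        exact hPmul _ _ ih hPrm1
    intro g
    rcases g with m | m
    · exact hPr m
    · have h := hPmul _ _ hP0 (hPr m)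
      rw [show (sr 0 : DihedralGroup 0) * r m = sr m by rw [sr_mul_r, zero_add]] at h
      exact h
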